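/- Let A : X → Y be a linear map between finite-dimensional real inner product spaces, v ∈ Y with A*[v] ≠ 0, and Δ the Cauchy step Δ = −(‖A*[v]‖²/‖A∘A*[v]‖²)A*[v]. Then ‖v + A[Δ]‖ ≤ ‖v‖·√(1 − ‖A*[v]‖²/(‖v‖²·‖A‖²_op)), where ‖A‖_op is the operator norm of A. -/

import Mathlib

theorem stmt_9 {X Y : Type*}
    [NormedAddCommGroup X] [InnerProductSpace ℝ X] [FiniteDimensional ℝ X]
    [NormedAddCommGroup Y] [InnerProductSpace ℝ Y] [FiniteDimensional ℝ Y]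
    (A : X →L[ℝ] Y) (v : Y) (hv : ContinuousLinearMap.adjoint A v ≠ 0) :
    let g := ContinuousLinearMap.adjoint A v
    let Δ := -(‖g‖ ^ 2 / ‖A g‖ ^ 2) • g
    ‖v + A Δ‖ ≤ ‖v‖ * Real.sqrt (1 - ‖g‖ ^ 2 / (‖v‖ ^ 2 * ‖A‖ ^ 2)) := by
  intro g Δ
  have hg : (0:ℝ) < ‖g‖ := norm_pos_iff.mpr hv
  have h1 : inner ℝ v (A g) = (‖g‖:ℝ) ^ 2 := by
    rw [← ContinuousLinearMap.adjoint_inner_left]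
    simp [g, real_inner_self_eq_norm_sq]
  have hAg : A g ≠ 0 := by
    intro h
    rw [h, inner_zero_right] at h1
    nlinarith
  have hAgn : (0:ℝ) < ‖A g‖ := norm_pos_iff.mpr hAg
  have hv0 : v ≠ 0 := by
    intro h; apply hv; simp [h]
  have hvn : (0:ℝ) < ‖v‖ := norm_pos_iff.mpr hv0
  have hAn : (0:ℝ) < ‖A‖ := by
    rcases (norm_nonneg A).lt_or_eq with h | h
    · exact h
    · exfalso; apply hAg
      have : A = 0 := by
        ext x; simpa using le_antisymm ((A.le_opNorm x).trans (by rw [← h]; simp)) (norm_nonneg _)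
      simp [this]
  -- exact residual identity
  have hsq : ‖v + A Δ‖ ^ 2 = ‖v‖ ^ 2 - ‖g‖ ^ 4 / ‖A g‖ ^ 2 := by
    have hAΔ : A Δ = -(‖g‖ ^ 2 / ‖A g‖ ^ 2) • A g := by
      simp [Δ, map_smul]
    rw [hAΔ, @norm_add_sq_real, inner_smul_right, h1, norm_smul]
    rw [mul_pow]
    have : ‖-(‖g‖ ^ 2 / ‖A g‖ ^ 2)‖ ^ 2 = (‖g‖ ^ 2 / ‖A g‖ ^ 2) ^ 2 := by
      rw [norm_neg, Real.norm_eq_abs, sq_abs]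
    rw [this]
    field_simp
    ring
  have hnorm_le : ‖A g‖ ≤ ‖A‖ * ‖g‖ := A.le_opNorm g
  have hbound : ‖g‖ ^ 2 / ‖A‖ ^ 2 ≤ ‖g‖ ^ 4 / ‖A g‖ ^ 2 := by
    rw [div_le_div_iff₀ (by positivity) (by positivity)]
    nlinarith [mul_le_mul hnorm_le hnorm_le (norm_nonneg (A g)) (by positivity : (0:ℝ) ≤ ‖A‖ * ‖g‖), sq_nonneg ‖g‖, hg]
  have key : ‖v + A Δ‖ ^ 2 ≤ ‖v‖ ^ 2 * (1 - ‖g‖ ^ 2 / (‖v‖ ^ 2 * ‖A‖ ^ 2)) := by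
    rw [hsq]
    have : ‖v‖ ^ 2 * (1 - ‖g‖ ^ 2 / (‖v‖ ^ 2 * ‖A‖ ^ 2)) = ‖v‖ ^ 2 - ‖g‖ ^ 2 / ‖A‖ ^ 2 := by
      field_simp
    rw [this]
    linarith
  calc ‖v + A Δ‖ = Real.sqrt (‖v + A Δ‖ ^ 2) := by
        rw [Real.sqrt_sq (norm_nonneg _)]
    _ ≤ Real.sqrt (‖v‖ ^ 2 * (1 - ‖g‖ ^ 2 / (‖v‖ ^ 2 * ‖A‖ ^ 2))) := Real.sqrt_le_sqrt key
    _ = ‖v‖ * Real.sqrt (1 - ‖g‖ ^ 2 / (‖v‖ ^ 2 * ‖A‖ ^ 2)) := by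
        rw [Real.sqrt_mul (sq_nonneg _), Real.sqrt_sq (norm_nonneg _)]
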